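/- Fix N∈ℕ, x,y∈ℤ, f:{0,…,N}→ℤ∪{∞} and g:{0,…,N}→ℤ∪{−∞} such that Ω(N,x,y,f,g) is nonempty. Suppose B,C ⊆ ℤ^{{0,…,N}} are either both increasing or both decreasing with respect to the coordinatewise partial order. Then P^{N,x,y,f,g}(L∈B∩C) ≥ P^{N,x,y,f,g}(L∈B) · P^{N,x,y,f,g}(L∈C). -/

import Mathlib

/-- A Bernoulli path on `{0,…,N}`: increments in `{0,1}`. -/
def IsBPath (N : ℕ) (L : Fin (N+1) → ℤ) : Prop :=
  ∀ j : Fin N, L j.succ = L j.castSucc ∨ L j.succ = L j.castSucc + 1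

/-- `Ω(N,x,y,f,g)`: Bernoulli paths from `x` to `y` staying below the barrier `f`
and above the barrier `g`. -/
def pathSetB (N : ℕ) (x y : ℤ) (f : Fin (N+1) → WithTop ℤ) (g : Fin (N+1) → WithBot ℤ) :
    Set (Fin (N+1) → ℤ) :=
  {L | IsBPath N L ∧ L 0 = x ∧ L (Fin.last N) = y ∧
    (∀ j, (L j : WithTop ℤ) ≤ f j) ∧ (∀ j, g j ≤ (L j : WithBot ℤ))}

/-- Probability of the event `A` under the uniform measure on the finite set `Ω`. -/
noncomputable def unifProb {X : Type*} (Ω A : Set X) : ℝ :=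
  ((Ω ∩ A).ncard : ℝ) / (Ω.ncard : ℝ)

lemma bpath_bounds {N : ℕ} {L : Fin (N+1) → ℤ} (h : IsBPath N L) (j : Fin (N+1)) :
    L 0 ≤ L j ∧ L j ≤ L 0 + j.val := by
  induction j using Fin.induction with
  | zero => simp
  | succ i ih =>
    rcases h i with h' | h' <;>
      simp only [Fin.val_succ, Fin.coe_castSucc] at * <;> push_cast <;> omega

lemma pathSetB_finite (N : ℕ) (x y : ℤ) (f : Fin (N+1) → WithTop ℤ)
    (g : Fin (N+1) → WithBot ℤ) : (pathSetB N x y f g).Finite := by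
  apply Set.Finite.subset (Set.Finite.pi (fun i : Fin (N+1) => Set.finite_Icc x (x + N)))
  rintro L ⟨h1, h2, -, -, -⟩ j -
  have := bpath_bounds h1 j
  have : (j : ℕ) ≤ N := Nat.lt_succ_iff.mp j.isLt
  constructor <;> [skip; skip] <;> omega

lemma sup_mem_pathSetB {N : ℕ} {x y : ℤ} {f : Fin (N+1) → WithTop ℤ}
    {g : Fin (N+1) → WithBot ℤ} {L M : Fin (N+1) → ℤ}
    (hL : L ∈ pathSetB N x y f g) (hM : M ∈ pathSetB N x y f g) :
    L ⊔ M ∈ pathSetB N x y f g := by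
  obtain ⟨hL1, hL2, hL3, hL4, hL5⟩ := hL
  obtain ⟨hM1, hM2, hM3, hM4, hM5⟩ := hM
  refine ⟨fun j => ?_, by simp [hL2, hM2], by simp [hL3, hM3], fun j => ?_, fun j => ?_⟩
  · rcases hL1 j with h | h <;> rcases hM1 j with h' | h' <;>
      simp only [Pi.sup_apply] <;> omega
  · simp only [Pi.sup_apply]
    rw [WithTop.coe_max]
    exact max_le (hL4 j) (hM4 j)
  · simp only [Pi.sup_apply]
    rw [WithBot.coe_max]
    exact le_max_of_le_left (hL5 j)

lemma inf_mem_pathSetB {N : ℕ} {x y : ℤ} {f : Fin (N+1) → WithTop ℤ}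
    {g : Fin (N+1) → WithBot ℤ} {L M : Fin (N+1) → ℤ}
    (hL : L ∈ pathSetB N x y f g) (hM : M ∈ pathSetB N x y f g) :
    L ⊓ M ∈ pathSetB N x y f g := by
  obtain ⟨hL1, hL2, hL3, hL4, hL5⟩ := hL
  obtain ⟨hM1, hM2, hM3, hM4, hM5⟩ := hM
  refine ⟨fun j => ?_, by simp [hL2, hM2], by simp [hL3, hM3], fun j => ?_, fun j => ?_⟩
  · rcases hL1 j with h | h <;> rcases hM1 j with h' | h' <;>
      simp only [Pi.inf_apply] <;> omega
  · simp only [Pi.inf_apply]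
    rw [WithTop.coe_min]
    exact min_le_of_left_le (hL4 j)
  · simp only [Pi.inf_apply]
    rw [WithBot.coe_min]
    exact le_min (hL5 j) (hM5 j)

open Finset in
open scoped FinsetFamily in
/-- Key counting inequality on a finite sublattice. -/
lemma fkg_count {N : ℕ} {x y : ℤ} {f : Fin (N+1) → WithTop ℤ} {g : Fin (N+1) → WithBot ℤ}
    (B C : Set (Fin (N+1) → ℤ))
    (hBC : (IsUpperSet B ∧ IsUpperSet C) ∨ (IsLowerSet B ∧ IsLowerSet C)) :
    ((pathSetB N x y f g) ∩ B).ncard * ((pathSetB N x y f g) ∩ C).ncard ≤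
      (pathSetB N x y f g).ncard * ((pathSetB N x y f g) ∩ (B ∩ C)).ncard := by
  classical
  set Ω := pathSetB N x y f g with hΩ
  have hfin := pathSetB_finite N x y f g
  set Ω' : Finset (Fin (N+1) → ℤ) := hfin.toFinset with hΩ'
  have hcoe : (Ω' : Set _) = Ω := hfin.coe_toFinset
  have hA : Ω ∩ B = ↑(Ω'.filter (· ∈ B)) := by ext L; simp [hΩ', Set.Finite.mem_toFinset]; exact fun _ => Iff.rfl
  have hC : Ω ∩ C = ↑(Ω'.filter (· ∈ C)) := by ext L; simp [hΩ', Set.Finite.mem_toFinset]; exact fun _ => Iff.rfl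
  have hBCs : Ω ∩ (B ∩ C) = ↑(Ω'.filter (· ∈ B ∩ C)) := by
    ext L; simp [hΩ', Set.Finite.mem_toFinset, Set.mem_inter_iff, and_assoc]
    exact ⟨fun ⟨a, b, c⟩ => ⟨a, b, a, c⟩, fun ⟨a, b, _, c⟩ => ⟨a, b, c⟩⟩
  rw [hA, hC, hBCs, ← hcoe, Set.ncard_coe_finset, Set.ncard_coe_finset,
    Set.ncard_coe_finset, Set.ncard_coe_finset]
  set A := Ω'.filter (· ∈ B) with hAdef
  set D := Ω'.filter (· ∈ C) with hDdef
  have hmemΩ : ∀ {L}, L ∈ Ω' → L ∈ Ω := fun hL => (Set.Finite.mem_toFinset hfin).mp hL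
  have key := Finset.le_card_infs_mul_card_sups A D
  rcases hBC with ⟨hB, hCu⟩ | ⟨hB, hCl⟩
  · -- upper sets: sups land in B ∩ C, infs land in Ω
    have h1 : A ⊻ D ⊆ Ω'.filter (· ∈ B ∩ C) := by
      intro c hc
      obtain ⟨a, ha, b, hb, rfl⟩ := Finset.mem_sups.mp hc
      simp only [hAdef, hDdef, Finset.mem_filter] at ha hb ⊢
      exact ⟨(Set.Finite.mem_toFinset hfin).mpr (sup_mem_pathSetB (hmemΩ ha.1) (hmemΩ hb.1)),
        hB le_sup_left ha.2, hCu le_sup_right hb.2⟩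
    have h2 : A ⊼ D ⊆ Ω' := by
      intro c hc
      obtain ⟨a, ha, b, hb, rfl⟩ := Finset.mem_infs.mp hc
      simp only [hAdef, hDdef, Finset.mem_filter] at ha hb
      exact (Set.Finite.mem_toFinset hfin).mpr (inf_mem_pathSetB (hmemΩ ha.1) (hmemΩ hb.1))
    calc #A * #D ≤ #(A ⊼ D) * #(A ⊻ D) := key
      _ ≤ #Ω' * #(Ω'.filter (· ∈ B ∩ C)) :=
          Nat.mul_le_mul (Finset.card_le_card h2) (Finset.card_le_card h1)
  · -- lower sets: infs land in B ∩ C, sups land in Ω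
    have h1 : A ⊼ D ⊆ Ω'.filter (· ∈ B ∩ C) := by
      intro c hc
      obtain ⟨a, ha, b, hb, rfl⟩ := Finset.mem_infs.mp hc
      simp only [hAdef, hDdef, Finset.mem_filter] at ha hb ⊢
      exact ⟨(Set.Finite.mem_toFinset hfin).mpr (inf_mem_pathSetB (hmemΩ ha.1) (hmemΩ hb.1)),
        hB inf_le_left ha.2, hCl inf_le_right hb.2⟩
    have h2 : A ⊻ D ⊆ Ω' := by
      intro c hc
      obtain ⟨a, ha, b, hb, rfl⟩ := Finset.mem_sups.mp hc
      simp only [hAdef, hDdef, Finset.mem_filter] at ha hb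
      exact (Set.Finite.mem_toFinset hfin).mpr (sup_mem_pathSetB (hmemΩ ha.1) (hmemΩ hb.1))
    calc #A * #D ≤ #(A ⊼ D) * #(A ⊻ D) := key
      _ ≤ #(Ω'.filter (· ∈ B ∩ C)) * #Ω' :=
          Nat.mul_le_mul (Finset.card_le_card h1) (Finset.card_le_card h2)
      _ = #Ω' * #(Ω'.filter (· ∈ B ∩ C)) := Nat.mul_comm _ _


/-- Lemma 3.5 (FKG inequality for Bernoulli random walk bridges with barriers). -/
theorem stmt14 (N : ℕ) (x y : ℤ)
    (f : Fin (N+1) → WithTop ℤ) (g : Fin (N+1) → WithBot ℤ)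
    (hne : (pathSetB N x y f g).Nonempty)
    (B C : Set (Fin (N+1) → ℤ))
    (hBC : (IsUpperSet B ∧ IsUpperSet C) ∨ (IsLowerSet B ∧ IsLowerSet C)) :
    unifProb (pathSetB N x y f g) (B ∩ C) ≥
      unifProb (pathSetB N x y f g) B * unifProb (pathSetB N x y f g) C := by
  have hfin := pathSetB_finite N x y f g
  have hn : 0 < ((pathSetB N x y f g).ncard : ℝ) := by
    exact_mod_cast (Set.Nonempty.ncard_pos hfin hne)
  have key := fkg_count (x := x) (y := y) (f := f) (g := g) B C hBC
  have key' : (((pathSetB N x y f g) ∩ B).ncard : ℝ) * ((pathSetB N x y f g) ∩ C).ncard ≤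
      ((pathSetB N x y f g).ncard : ℝ) * ((pathSetB N x y f g) ∩ (B ∩ C)).ncard := by
    exact_mod_cast key
  unfold unifProb
  rw [div_mul_div_comm, ge_iff_le, div_le_div_iff₀ (by positivity) hn]
  nlinarith [hn, Nat.cast_nonneg (α := ℝ) ((pathSetB N x y f g) ∩ (B ∩ C)).ncard]
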